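/- (DRO representation for Group-Square-Root-Lasso linear regression.) Let (X_1,Y_1),…,(X_n,Y_n) ∈ ℝ^d × ℝ, let P_n be their empirical measure, let q, t ∈ [1,∞] with conjugates p, s (1/p + 1/q = 1, 1/s + 1/t = 1), let α ∈ ℝ^d̄ have strictly positive entries, and let c be the cost function c((x,y),(x',y')) = ‖x − x'‖_{α⁻¹-(q,t)}² if y = y' and +∞ otherwise. Then for every δ > 0, min over β ∈ ℝ^d of sup { (E_P[(Y − XᵀB β)²])^{1/2} : P a probability measure on ℝ^{d+1} with D_c(P, P_n) ≤ δ } equals min over β ∈ ℝ^d of (E_{P_n}[(Y − Xᵀβ)²])^{1/2} + √δ · ‖β‖_{α-(p,s)}. -/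

import Mathlib

open scoped ENNReal BigOperators
open MeasureTheory Filter

/-- The l_p norm (p ∈ [1,∞], with sup modification at p = ∞) of a finite real vector. -/
noncomputable def lpn (p : ℝ≥0∞) {ι : Type} [Fintype ι] (x : ι → ℝ) : ℝ :=
  ‖(WithLp.equiv p (ι → ℝ)).symm x‖

/-- The α-(p,s) groupwise norm: ‖x‖ = ( Σ_i α_i^s ‖x(G_i)‖_p^s )^{1/s}. -/
noncomputable def gnorm {d dbar : ℕ} (G : Fin dbar → Finset (Fin d)) (α : Fin dbar → ℝ)
    (p s : ℝ≥0∞) (x : Fin d → ℝ) : ℝ :=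
  lpn s (fun i => α i * lpn p (fun j : {k // k ∈ G i} => x j.1))

/-- G_1, …, G_d̄ form a partition of {1,…,d} into nonempty disjoint groups. -/
def IsPartition {d dbar : ℕ} (G : Fin dbar → Finset (Fin d)) : Prop :=
  (∀ i, (G i).Nonempty) ∧ (∀ i j, i ≠ j → Disjoint (G i) (G j)) ∧ (∀ k, ∃ i, k ∈ G i)

/-- Optimal transport discrepancy with cost `c`: the Kantorovich infimum over couplings of
`P` and `Q`. -/
noncomputable def Dc {E : Type} [MeasurableSpace E] (c : E → E → ℝ≥0∞)
    (P Q : Measure E) : ℝ≥0∞ :=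
  ⨅ (π : Measure (E × E)) (_ : π.map Prod.fst = P) (_ : π.map Prod.snd = Q),
    ∫⁻ z, c z.1 z.2 ∂π

section AuxLpn

variable {ι : Type} [Fintype ι]

lemma lpn_eq_sum {p : ℝ≥0∞} (hp : 0 < p.toReal) (x : ι → ℝ) :
    lpn p x = (∑ i, |x i| ^ p.toReal) ^ (1 / p.toReal) := by
  rw [lpn, PiLp.norm_eq_sum hp]
  simp [Real.norm_eq_abs]

lemma lpn_eq_ciSup (x : ι → ℝ) : lpn ∞ x = ⨆ i, |x i| := by
  rw [lpn, PiLp.norm_eq_ciSup]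
  simp [Real.norm_eq_abs]

lemma lpn_nonneg {p : ℝ≥0∞} (hp : 1 ≤ p) (x : ι → ℝ) : 0 ≤ lpn p x := by
  haveI := Fact.mk hp
  exact norm_nonneg _

lemma lpn_zero {p : ℝ≥0∞} (hp : 1 ≤ p) : lpn p (0 : ι → ℝ) = 0 := by
  haveI := Fact.mk hp
  simp only [lpn]
  rw [show ((WithLp.equiv p (ι → ℝ)).symm 0) = 0 from rfl, norm_zero]

lemma lpn_smul {p : ℝ≥0∞} (hp : 1 ≤ p) (c : ℝ) (x : ι → ℝ) :
    lpn p (c • x) = |c| * lpn p x := by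
  haveI := Fact.mk hp
  simp only [lpn]
  rw [show ((WithLp.equiv p (ι → ℝ)).symm (c • x)) = c • (WithLp.equiv p (ι → ℝ)).symm x from rfl,
    norm_smul, Real.norm_eq_abs]

lemma lpn_cases {p : ℝ≥0∞} (hp : 1 ≤ p) : p = ∞ ∨ 0 < p.toReal := by
  rcases eq_or_ne p ∞ with h | h
  · exact Or.inl h
  · exact Or.inr (ENNReal.toReal_pos (by intro h0; simp [h0] at hp) h)

lemma lpn_mono {p : ℝ≥0∞} (hp : 1 ≤ p) {x y : ι → ℝ} (h : ∀ i, |x i| ≤ |y i|) :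
    lpn p x ≤ lpn p y := by
  rcases lpn_cases hp with rfl | hpr
  · rw [lpn_eq_ciSup, lpn_eq_ciSup]
    rcases isEmpty_or_nonempty ι with hι | hι
    · simp
    · exact ciSup_mono (Set.Finite.bddAbove (Set.finite_range _)) h
  · rw [lpn_eq_sum hpr, lpn_eq_sum hpr]
    apply Real.rpow_le_rpow (by positivity) _ (by positivity)
    exact Finset.sum_le_sum fun i _ =>
      Real.rpow_le_rpow (abs_nonneg _) (h i) hpr.le

lemma lpn_abs {p : ℝ≥0∞} (hp : 1 ≤ p) (x : ι → ℝ) :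
    lpn p (fun i => |x i|) = lpn p x :=
  le_antisymm (lpn_mono hp fun i => by simp) (lpn_mono hp fun i => by simp)

lemma lpn_continuous {p : ℝ≥0∞} (hp : 1 ≤ p) : Continuous (lpn p (ι := ι)) := by
  haveI := Fact.mk hp
  exact continuous_norm.comp (PiLp.continuous_toLp p (fun _ : ι => ℝ))

lemma conj_cases {p q : ℝ≥0∞} (hp : 1 ≤ p) (hpq : 1/p + 1/q = 1) :
    (p = 1 ∧ q = ∞) ∨ (p = ∞ ∧ q = 1) ∨
      (p ≠ ∞ ∧ q ≠ ∞ ∧ p.toReal.HolderConjugate q.toReal) := by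
  simp only [one_div] at hpq
  rcases eq_or_ne p 1 with rfl | hp1
  · left
    refine ⟨rfl, ?_⟩
    rw [inv_one] at hpq
    have : (1 : ℝ≥0∞) + q⁻¹ = 1 + 0 := by simpa using hpq
    rw [ENNReal.add_right_inj (by simp)] at this
    exact ENNReal.inv_eq_zero.mp this
  rcases eq_or_ne p ∞ with rfl | hptop
  · right; left
    refine ⟨rfl, ?_⟩
    rw [ENNReal.inv_top, zero_add] at hpq
    exact ENNReal.inv_eq_one.mp hpq
  · right; right
    have hplt : 1 < p := lt_of_le_of_ne hp (Ne.symm hp1)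
    have hpinv : p⁻¹ < 1 := ENNReal.inv_lt_one.mpr hplt
    have hq0 : q ≠ 0 := by
      rintro rfl
      simp at hpq
    have hqtop : q ≠ ∞ := by
      rintro rfl
      rw [ENNReal.inv_top, add_zero] at hpq
      exact hp1 (ENNReal.inv_eq_one.mp hpq)
    have hp0 : p ≠ 0 := by positivity
    have htr : p.toReal⁻¹ + q.toReal⁻¹ = 1 := by
      have := congrArg ENNReal.toReal hpq
      rw [ENNReal.toReal_add (by simp [hp0]) (by simp [hq0]), ENNReal.toReal_inv,
        ENNReal.toReal_inv, ENNReal.toReal_one] at this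
      exact this
    have h1p : 1 < p.toReal := by
      rw [← ENNReal.toReal_one]
      exact ENNReal.toReal_lt_toReal (by simp) hptop |>.mpr hplt
    exact ⟨hptop, hqtop, Real.holderConjugate_iff.mpr ⟨h1p, htr⟩⟩

lemma lpn_one_eq (x : ι → ℝ) : lpn 1 x = ∑ i, |x i| := by
  rw [lpn_eq_sum (by simp) x]
  simp

lemma lpn_holder {p q : ℝ≥0∞} (hp : 1 ≤ p) (hq : 1 ≤ q) (hpq : 1/p + 1/q = 1)
    (x y : ι → ℝ) : ∑ i, |x i * y i| ≤ lpn p x * lpn q y := by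
  have key : ∀ (u v : ι → ℝ), ∑ i, |u i * v i| ≤ lpn 1 u * lpn ∞ v := by
    intro u v
    rw [lpn_one_eq, lpn_eq_ciSup, Finset.sum_mul]
    refine Finset.sum_le_sum fun i _ => ?_
    rw [abs_mul]
    refine mul_le_mul_of_nonneg_left ?_ (abs_nonneg _)
    exact le_ciSup (f := fun i => |v i|) (Set.Finite.bddAbove (Set.finite_range _)) i
  rcases conj_cases hp hpq with ⟨rfl, rfl⟩ | ⟨rfl, rfl⟩ | ⟨hpt, hqt, hc⟩
  · exact key x y
  · calc ∑ i, |x i * y i| = ∑ i, |y i * x i| := by simp [mul_comm, abs_mul]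
      _ ≤ lpn 1 y * lpn ∞ x := key y x
      _ = lpn ∞ x * lpn 1 y := mul_comm _ _
  · have := Real.inner_le_Lp_mul_Lq (s := Finset.univ)
      (fun i => |x i|) (fun i => |y i|) hc
    simp only [abs_abs] at this
    rw [lpn_eq_sum hc.pos x, lpn_eq_sum hc.symm.pos y]
    calc ∑ i, |x i * y i| = ∑ i, |x i| * |y i| := by simp [abs_mul]
      _ ≤ _ := this

/-- sign-like helper -/
noncomputable def sg (a : ℝ) : ℝ := if a < 0 then -1 else if 0 < a then 1 else 0

lemma sg_mul_self (a : ℝ) : sg a * a = |a| := by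
  unfold sg
  rcases lt_trichotomy a 0 with h | h | h
  · simp [h, abs_of_neg h]
  · simp [h]
  · rw [if_neg (not_lt.mpr h.le), if_pos h, abs_of_pos h]; ring

lemma abs_sg_le (a : ℝ) : |sg a| ≤ 1 := by
  unfold sg
  rcases lt_trichotomy a 0 with h | h | h
  · simp [h]
  · simp [h]
  · rw [if_neg (not_lt.mpr h.le), if_pos h]; simp

lemma lpn_dual_exists {p q : ℝ≥0∞} (hp : 1 ≤ p) (hq : 1 ≤ q) (hpq : 1/p + 1/q = 1)
    (y : ι → ℝ) : ∃ x : ι → ℝ, lpn q x ≤ 1 ∧ ∑ i, x i * y i = lpn p y := by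
  classical
  rcases conj_cases hp hpq with ⟨rfl, rfl⟩ | ⟨rfl, rfl⟩ | ⟨hpt, hqt, hc⟩
  · refine ⟨fun i => sg (y i), ?_, ?_⟩
    · rw [lpn_eq_ciSup]
      rcases isEmpty_or_nonempty ι with hι | hι
      · rw [Real.iSup_of_isEmpty]; norm_num
      · exact ciSup_le fun i => abs_sg_le _
    · rw [lpn_one_eq]
      exact Finset.sum_congr rfl fun i _ => sg_mul_self _
  · rcases isEmpty_or_nonempty ι with hι | hι
    · refine ⟨0, ?_, ?_⟩
      · rw [lpn_zero hq]; norm_num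
      · rw [lpn_eq_ciSup, Real.iSup_of_isEmpty]
        simp
    · obtain ⟨i₀, -, hmax⟩ := Finset.exists_max_image Finset.univ (fun i => |y i|)
        ⟨Classical.arbitrary ι, Finset.mem_univ _⟩
      refine ⟨fun i => if i = i₀ then sg (y i₀) else 0, ?_, ?_⟩
      · rw [lpn_one_eq]
        calc ∑ i, |if i = i₀ then sg (y i₀) else 0|
            = ∑ i, if i = i₀ then |sg (y i₀)| else 0 := by
              refine Finset.sum_congr rfl fun i _ => ?_
              by_cases h : i = i₀ <;> simp [h]
          _ = |sg (y i₀)| := by rw [Finset.sum_ite_eq' Finset.univ i₀ (fun _ => |sg (y i₀)|)]; simp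
          _ ≤ 1 := abs_sg_le _
      · rw [lpn_eq_ciSup]
        calc ∑ i, (if i = i₀ then sg (y i₀) else 0) * y i
            = ∑ i, if i = i₀ then sg (y i₀) * y i₀ else 0 := by
              refine Finset.sum_congr rfl fun i _ => ?_
              by_cases h : i = i₀ <;> simp [h]
          _ = sg (y i₀) * y i₀ := by rw [Finset.sum_ite_eq' Finset.univ i₀ (fun _ => sg (y i₀) * y i₀)]; simp
          _ = |y i₀| := sg_mul_self _
          _ = ⨆ i, |y i| := le_antisymm
              (le_ciSup (f := fun i => |y i|) (Set.Finite.bddAbove (Set.finite_range _)) i₀)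
              (ciSup_le fun i => hmax i (Finset.mem_univ i))
  · by_cases hy : y = 0
    · refine ⟨0, by rw [lpn_zero hq]; norm_num, by simp [hy, lpn_zero hp]⟩
    set pr := p.toReal with hprdef
    set qr := q.toReal with hqrdef
    have hpr1 : 1 < pr := hc.lt
    have hpr0 : 0 < pr := hc.pos
    set N := lpn p y with hN
    set S := ∑ i, |y i| ^ pr with hS
    have hNf : N = S ^ (1/pr) := lpn_eq_sum hpr0 y
    have hSpos : 0 < S := by
      obtain ⟨i, hi⟩ := Function.ne_iff.mp hy
      have h1 : 0 < |y i| ^ pr := Real.rpow_pos_of_pos (abs_pos.mpr hi) pr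
      have h2 : ∀ j ∈ Finset.univ, (0:ℝ) ≤ |y j| ^ pr := fun j _ =>
        Real.rpow_nonneg (abs_nonneg _) pr
      exact lt_of_lt_of_le h1 (Finset.single_le_sum h2 (Finset.mem_univ i))
    have hNpos : 0 < N := by rw [hNf]; exact Real.rpow_pos_of_pos hSpos _
    have hNpr : N ^ pr = S := by
      rw [hNf, ← Real.rpow_mul hSpos.le, one_div, inv_mul_cancel₀ hpr0.ne', Real.rpow_one]
    have hNp1 : N ^ (pr - 1) = S / N := by
      rw [Real.rpow_sub hNpos, Real.rpow_one, hNpr]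
    have habs : ∀ i, |y i * |y i| ^ (pr - 2)| = |y i| ^ (pr - 1) := by
      intro i
      by_cases hyi : y i = 0
      · rw [hyi, abs_zero, zero_mul, abs_zero, Real.zero_rpow (by linarith : pr - 1 ≠ 0)]
      · have hpos : 0 < |y i| := abs_pos.mpr hyi
        rw [abs_mul, abs_of_nonneg (Real.rpow_nonneg (abs_nonneg _) _)]
        calc |y i| * |y i| ^ (pr - 2)
            = |y i| ^ (1:ℝ) * |y i| ^ (pr - 2) := by rw [Real.rpow_one]
          _ = |y i| ^ (pr - 1) := by rw [← Real.rpow_add hpos]; ring_nf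
    have hxy : ∀ i, (y i * |y i| ^ (pr - 2)) * y i = |y i| ^ pr := by
      intro i
      by_cases hyi : y i = 0
      · rw [hyi, mul_zero, abs_zero, Real.zero_rpow hpr0.ne']
      · have hpos : 0 < |y i| := abs_pos.mpr hyi
        have h2 : y i * |y i| ^ (pr - 2) * y i = |y i| * |y i| * |y i| ^ (pr - 2) := by
          rw [abs_mul_abs_self]; ring
        rw [h2]
        calc |y i| * |y i| * |y i| ^ (pr - 2)
            = |y i| ^ (1:ℝ) * |y i| ^ (1:ℝ) * |y i| ^ (pr - 2) := by rw [Real.rpow_one]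
          _ = |y i| ^ pr := by rw [← Real.rpow_add hpos, ← Real.rpow_add hpos]; ring_nf
    refine ⟨fun i => (y i * |y i| ^ (pr - 2)) / N ^ (pr - 1), ?_, ?_⟩
    · have hqr0 : 0 < qr := hc.symm.pos
      rw [lpn_eq_sum hqr0]
      have hterm : ∀ i, |(y i * |y i| ^ (pr - 2)) / N ^ (pr - 1)| ^ qr
          = |y i| ^ pr / N ^ pr := by
        intro i
        rw [abs_div, habs i, abs_of_nonneg (Real.rpow_nonneg hNpos.le _),
          Real.div_rpow (Real.rpow_nonneg (abs_nonneg _) _) (Real.rpow_nonneg hNpos.le _),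
          ← Real.rpow_mul (abs_nonneg _), ← Real.rpow_mul hNpos.le,
          hc.sub_one_mul_conj]
      simp only [← hqrdef, hterm]
      rw [← Finset.sum_div, ← hS, hNpr, div_self hSpos.ne']
      rw [Real.one_rpow]
    · have : ∀ i, (y i * |y i| ^ (pr - 2)) / N ^ (pr - 1) * y i
          = |y i| ^ pr / N ^ (pr - 1) := by
        intro i
        rw [div_mul_eq_mul_div, hxy i]
      simp only [this]
      rw [← Finset.sum_div, ← hS, hNp1, div_div_eq_mul_div, mul_comm, mul_div_assoc,
        div_self hSpos.ne', mul_one]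

section gnorm

variable {d dbar : ℕ} {G : Fin dbar → Finset (Fin d)} (hG : IsPartition G)
  {α : Fin dbar → ℝ} (hα : ∀ i, 0 < α i)

include hG in
lemma partition_sum (f : Fin d → ℝ) :
    ∑ k, f k = ∑ i, ∑ k ∈ G i, f k := by
  have huniv : (Finset.univ : Finset (Fin d)) = Finset.univ.biUnion G := by
    ext k
    constructor
    · intro _
      obtain ⟨i, hi⟩ := hG.2.2 k
      exact Finset.mem_biUnion.mpr ⟨i, Finset.mem_univ i, hi⟩
    · intro _
      exact Finset.mem_univ k
  rw [show ∑ k, f k = ∑ k ∈ Finset.univ.biUnion G, f k by rw [← huniv]]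
  exact Finset.sum_biUnion (fun i _ j _ hij => hG.2.1 i j hij)

lemma sub_sum_eq (g : Fin d → ℝ) (i : Fin dbar) :
    ∑ j : {k // k ∈ G i}, g j.1 = ∑ k ∈ G i, g k := Finset.sum_coe_sort (G i) g

lemma gnorm_nonneg {p s : ℝ≥0∞} (hs : 1 ≤ s) (x : Fin d → ℝ) :
    0 ≤ gnorm G α p s x := lpn_nonneg hs _

lemma gnorm_smul {p s : ℝ≥0∞} (hp : 1 ≤ p) (hs : 1 ≤ s) (c : ℝ) (x : Fin d → ℝ) :
    gnorm G α p s (c • x) = |c| * gnorm G α p s x := by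
  unfold gnorm
  have h1 : ∀ i, (fun j : {k // k ∈ G i} => (c • x) j.1)
      = c • (fun j : {k // k ∈ G i} => x j.1) := fun i => rfl
  have h2 : (fun i => α i * lpn p (fun j : {k // k ∈ G i} => (c • x) j.1))
      = |c| • (fun i => α i * lpn p (fun j : {k // k ∈ G i} => x j.1)) := by
    funext i
    rw [h1 i, lpn_smul hp]
    simp only [Pi.smul_apply, smul_eq_mul]
    ring
  rw [h2, lpn_smul hs, abs_abs]

include hG hα in
lemma gnorm_holder {p q s t : ℝ≥0∞} (hp : 1 ≤ p) (hq : 1 ≤ q) (hs : 1 ≤ s) (ht : 1 ≤ t)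
    (hpq : 1/p + 1/q = 1) (hst : 1/s + 1/t = 1) (v β : Fin d → ℝ) :
    |∑ k, v k * β k| ≤ gnorm G (fun i => (α i)⁻¹) q t v * gnorm G α p s β := by
  have hts : 1/t + 1/s = 1 := by rw [add_comm]; exact hst
  set A := fun i => (α i)⁻¹ * lpn q (fun j : {k // k ∈ G i} => v j.1) with hA
  set B := fun i => α i * lpn p (fun j : {k // k ∈ G i} => β j.1) with hB
  calc |∑ k, v k * β k| = |∑ i, ∑ k ∈ G i, v k * β k| := by rw [partition_sum hG (fun k => v k * β k)]
    _ ≤ ∑ i, |∑ k ∈ G i, v k * β k| := Finset.abs_sum_le_sum_abs _ _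
    _ ≤ ∑ i, A i * B i := by
        refine Finset.sum_le_sum fun i _ => ?_
        rw [← sub_sum_eq (fun k => v k * β k) i]
        have h1 : |∑ j : {k // k ∈ G i}, v j.1 * β j.1|
            ≤ ∑ j : {k // k ∈ G i}, |v j.1 * β j.1| := Finset.abs_sum_le_sum_abs _ _
        have h2 := lpn_holder hq hp (by rw [add_comm]; exact hpq)
          (fun j : {k // k ∈ G i} => v j.1) (fun j : {k // k ∈ G i} => β j.1)
        have h3 : A i * B i = lpn q (fun j : {k // k ∈ G i} => v j.1)
            * lpn p (fun j : {k // k ∈ G i} => β j.1) := by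
          have hne := (hα i).ne'
          rw [hA, hB]
          field_simp
        rw [h3]
        exact h1.trans h2
    _ ≤ ∑ i, |A i * B i| := Finset.sum_le_sum fun i _ => le_abs_self _
    _ ≤ lpn t A * lpn s B := lpn_holder ht hs hts A B
    _ = gnorm G (fun i => (α i)⁻¹) q t v * gnorm G α p s β := rfl

end gnorm

section gdual

variable {d dbar : ℕ} {G : Fin dbar → Finset (Fin d)} (hG : IsPartition G)
  {α : Fin dbar → ℝ} (hα : ∀ i, 0 < α i)

include hG hα in
lemma gnorm_dual_exists {p q s t : ℝ≥0∞} (hp : 1 ≤ p) (hq : 1 ≤ q) (hs : 1 ≤ s) (ht : 1 ≤ t)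
    (hpq : 1/p + 1/q = 1) (hst : 1/s + 1/t = 1) (β : Fin d → ℝ) :
    ∃ v : Fin d → ℝ, gnorm G (fun i => (α i)⁻¹) q t v ≤ 1 ∧
      ∑ k, v k * β k = gnorm G α p s β := by
  classical
  choose w hw1 hw2 using fun i => lpn_dual_exists hp hq hpq (fun j : {k // k ∈ G i} => β j.1)
  set B := fun i => α i * lpn p (fun j : {k // k ∈ G i} => β j.1) with hBdef
  obtain ⟨c, hc1, hc2⟩ := lpn_dual_exists hs ht hst B
  set I : Fin d → Fin dbar := fun k => (hG.2.2 k).choose with hIdef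
  have hI : ∀ k, k ∈ G (I k) := fun k => (hG.2.2 k).choose_spec
  have hIuniq : ∀ {k : Fin d} {i : Fin dbar}, k ∈ G i → I k = i := by
    intro k i hk
    by_contra hne
    exact Finset.disjoint_left.mp (hG.2.1 _ _ hne) (hI k) hk
  set W : Fin dbar → Fin d → ℝ := fun i k => if h : k ∈ G i then w i ⟨k, h⟩ else 0 with hWdef
  have hW : ∀ i (j : {k // k ∈ G i}), W i j.1 = w i j := by
    intro i j
    rw [hWdef]
    simp only [j.2, dif_pos]
  set v : Fin d → ℝ := fun k => c (I k) * α (I k) * W (I k) k with hvdef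
  have hv : ∀ i (j : {k // k ∈ G i}), v j.1 = c i * α i * w i j := by
    intro i j
    rw [hvdef]
    simp only [hIuniq j.2]
    rw [hW i j]
  have hvG : ∀ i, (fun j : {k // k ∈ G i} => v j.1)
      = (c i * α i) • (fun j : {k // k ∈ G i} => w i j) := by
    intro i
    funext j
    rw [hv i j]
    simp [smul_eq_mul]
  refine ⟨v, ?_, ?_⟩
  · unfold gnorm
    have hentry : ∀ i, (α i)⁻¹ * lpn q (fun j : {k // k ∈ G i} => v j.1)
        = |c i| * lpn q (w i) := by
      intro i
      rw [hvG i, lpn_smul hq, abs_mul, abs_of_pos (hα i)]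
      have hne := (hα i).ne'
      field_simp
    calc lpn t (fun i => (α i)⁻¹ * lpn q (fun j : {k // k ∈ G i} => v j.1))
        ≤ lpn t c := by
          refine lpn_mono ht fun i => ?_
          rw [hentry i, abs_of_nonneg (mul_nonneg (abs_nonneg _) (lpn_nonneg hq _))]
          calc |c i| * lpn q (w i) ≤ |c i| * 1 :=
                mul_le_mul_of_nonneg_left (hw1 i) (abs_nonneg _)
            _ = |c i| := mul_one _
      _ ≤ 1 := hc1
  · calc ∑ k, v k * β k = ∑ i, ∑ k ∈ G i, v k * β k :=
          partition_sum hG (fun k => v k * β k)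
      _ = ∑ i, c i * B i := by
          refine Finset.sum_congr rfl fun i _ => ?_
          rw [← sub_sum_eq (fun k => v k * β k) i]
          calc ∑ j : {k // k ∈ G i}, v j.1 * β j.1
              = ∑ j : {k // k ∈ G i}, c i * α i * (w i j * β j.1) := by
                refine Finset.sum_congr rfl fun j _ => ?_
                rw [hv i j]; ring
            _ = c i * α i * ∑ j : {k // k ∈ G i}, w i j * β j.1 := by
                rw [Finset.mul_sum]
            _ = c i * α i * lpn p (fun j : {k // k ∈ G i} => β j.1) := by rw [hw2 i]
            _ = c i * B i := by rw [hBdef]; ring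
      _ = gnorm G α p s β := hc2

end gdual

section Meas

lemma measure_map_finset_sum {E F : Type} [MeasurableSpace E] [MeasurableSpace F]
    {f : E → F} (hf : Measurable f) {ι : Type} (s : Finset ι) (μ : ι → Measure E) :
    (∑ i ∈ s, μ i).map f = ∑ i ∈ s, (μ i).map f := by
  induction s using Finset.cons_induction with
  | empty => simp [Measure.map_zero]
  | cons a s ha ih => rw [Finset.sum_cons, Measure.map_add _ _ hf, ih, Finset.sum_cons]

variable {d dbar : ℕ} {G : Fin dbar → Finset (Fin d)} {α : Fin dbar → ℝ}

lemma gnorm_continuous {p s : ℝ≥0∞} (hp : 1 ≤ p) (hs : 1 ≤ s) :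
    Continuous (gnorm G α p s) := by
  unfold gnorm
  refine (lpn_continuous hs).comp (continuous_pi fun i => ?_)
  exact continuous_const.mul ((lpn_continuous hp).comp
    (continuous_pi fun j => continuous_apply j.1))

lemma res_continuous_real (β : Fin d → ℝ) :
    Continuous (fun z : (Fin d → ℝ) × ℝ => z.2 - ∑ k, z.1 k * β k) :=
  continuous_snd.sub (continuous_finset_sum _ fun k _ =>
    ((continuous_apply k).comp continuous_fst).mul continuous_const)

lemma res_continuous (β : Fin d → ℝ) :
    Continuous (fun z : (Fin d → ℝ) × ℝ => ENNReal.ofReal ((z.2 - ∑ k, z.1 k * β k) ^ 2)) := by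
  refine ENNReal.continuous_ofReal.comp ?_
  exact Continuous.pow (res_continuous_real β) 2

lemma cost_measurable {q t : ℝ≥0∞} (hq : 1 ≤ q) (ht : 1 ≤ t) :
    Measurable (fun z : ((Fin d → ℝ) × ℝ) × ((Fin d → ℝ) × ℝ) =>
      if z.1.2 = z.2.2 then
        ENNReal.ofReal ((gnorm G α q t (z.1.1 - z.2.1)) ^ 2) else ⊤) := by
  have hset : MeasurableSet {z : ((Fin d → ℝ) × ℝ) × ((Fin d → ℝ) × ℝ) | z.1.2 = z.2.2} :=
    measurableSet_eq_fun (measurable_snd.comp measurable_fst)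
      (measurable_snd.comp measurable_snd)
  refine Measurable.ite hset ?_ measurable_const
  refine (ENNReal.continuous_ofReal.comp ?_).measurable
  refine Continuous.pow ?_ 2
  exact (gnorm_continuous hq ht).comp
    ((continuous_fst.comp continuous_fst).sub (continuous_fst.comp continuous_snd))

end Meas

lemma sq_rpow_half (x : ℝ≥0∞) : (x ^ 2) ^ (1/2 : ℝ) = x := by
  rw [← ENNReal.rpow_natCast x 2, ← ENNReal.rpow_mul]
  norm_num

lemma rpow_two_eq_sq (x : ℝ≥0∞) : x ^ (2 : ℝ) = x ^ 2 := by
  rw [← ENNReal.rpow_natCast x 2]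
  norm_num

section Coupling

variable {d dbar : ℕ} {G : Fin dbar → Finset (Fin d)} (hG : IsPartition G)
  {α : Fin dbar → ℝ} (hα : ∀ i, 0 < α i)

include hG hα in
lemma coupling_bound {p q s t : ℝ≥0∞} (hp : 1 ≤ p) (hq : 1 ≤ q) (hs : 1 ≤ s) (ht : 1 ≤ t)
    (hpq : 1/p + 1/q = 1) (hst : 1/s + 1/t = 1) (β : Fin d → ℝ)
    (P Q : Measure ((Fin d → ℝ) × ℝ)) (π : Measure (((Fin d → ℝ) × ℝ) × ((Fin d → ℝ) × ℝ)))
    (h1 : π.map Prod.fst = P) (h2 : π.map Prod.snd = Q) (b : ℝ≥0∞) (hbne : b ≠ ∞)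
    (hb : ∫⁻ z, (if z.1.2 = z.2.2 then
        ENNReal.ofReal ((gnorm G (fun i => (α i)⁻¹) q t (z.1.1 - z.2.1)) ^ 2) else ⊤) ∂π ≤ b) :
    (∫⁻ z, ENNReal.ofReal ((z.2 - ∑ k, z.1 k * β k) ^ 2) ∂P) ^ (1/2 : ℝ)
      ≤ (∫⁻ z, ENNReal.ofReal ((z.2 - ∑ k, z.1 k * β k) ^ 2) ∂Q) ^ (1/2 : ℝ)
        + b ^ (1/2 : ℝ) * ENNReal.ofReal (gnorm G α p s β) := by
  set α' : Fin dbar → ℝ := fun i => (α i)⁻¹ with hα'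
  set Bg := gnorm G α p s β with hBg
  have hBg0 : 0 ≤ Bg := gnorm_nonneg hs β
  set res : (Fin d → ℝ) × ℝ → ℝ := fun z => z.2 - ∑ k, z.1 k * β k with hres
  set F := fun z : (Fin d → ℝ) × ℝ => ENNReal.ofReal ((res z) ^ 2) with hF
  have hFm : Measurable F := (res_continuous β).measurable
  set cost := fun z : ((Fin d → ℝ) × ℝ) × ((Fin d → ℝ) × ℝ) =>
    (if z.1.2 = z.2.2 then ENNReal.ofReal ((gnorm G α' q t (z.1.1 - z.2.1)) ^ 2) else ⊤)
    with hcost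
  have hcm : Measurable cost := cost_measurable hq ht
  have hC : ∫⁻ z, cost z ∂π ≠ ∞ := (lt_of_le_of_lt hb (lt_top_iff_ne_top.mpr hbne)).ne
  have haey : ∀ᵐ z ∂π, z.1.2 = z.2.2 := by
    filter_upwards [ae_lt_top hcm hC] with z hz
    by_contra hne
    rw [hcost] at hz
    simp only [if_neg hne] at hz
    exact (lt_irrefl _ hz).elim
  set f := fun z : ((Fin d → ℝ) × ℝ) × ((Fin d → ℝ) × ℝ) => ENNReal.ofReal |res z.1| with hf
  set g := fun z : ((Fin d → ℝ) × ℝ) × ((Fin d → ℝ) × ℝ) => ENNReal.ofReal |res z.2| with hg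
  set h := fun z : ((Fin d → ℝ) × ℝ) × ((Fin d → ℝ) × ℝ) =>
    ENNReal.ofReal (gnorm G α' q t (z.1.1 - z.2.1)) * ENNReal.ofReal Bg with hh
  have hresm : Continuous res := res_continuous_real β
  have hgm : Measurable g :=
    (ENNReal.continuous_ofReal.comp
      (continuous_abs.comp (hresm.comp continuous_snd))).measurable
  have hfm : Measurable f :=
    (ENNReal.continuous_ofReal.comp
      (continuous_abs.comp (hresm.comp continuous_fst))).measurable
  have hgnc : Continuous (fun z : ((Fin d → ℝ) × ℝ) × ((Fin d → ℝ) × ℝ) =>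
      gnorm G α' q t (z.1.1 - z.2.1)) :=
    (gnorm_continuous hq ht).comp
      ((continuous_fst.comp continuous_fst).sub (continuous_fst.comp continuous_snd))
  have hhm : Measurable h :=
    ((ENNReal.continuous_ofReal.comp hgnc).measurable).mul measurable_const
  -- pointwise a.e. inequality
  have hpt : ∀ᵐ z ∂π, f z ≤ g z + h z := by
    filter_upwards [haey] with z hz
    have hreal : |res z.1| ≤ |res z.2| + gnorm G α' q t (z.1.1 - z.2.1) * Bg := by
      have hdiff : res z.1 = res z.2 - ∑ k, (z.1.1 - z.2.1) k * β k := by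
        simp only [hres, Pi.sub_apply, sub_mul, Finset.sum_sub_distrib]
        rw [hz]
        ring
      have hhold := gnorm_holder hG hα hp hq hs ht hpq hst (z.1.1 - z.2.1) β
      calc |res z.1| = |res z.2 - ∑ k, (z.1.1 - z.2.1) k * β k| := by rw [hdiff]
        _ ≤ |res z.2| + |∑ k, (z.1.1 - z.2.1) k * β k| := abs_sub _ _
        _ ≤ |res z.2| + gnorm G α' q t (z.1.1 - z.2.1) * Bg :=
            add_le_add_right hhold _
    calc f z = ENNReal.ofReal |res z.1| := rfl
      _ ≤ ENNReal.ofReal (|res z.2| + gnorm G α' q t (z.1.1 - z.2.1) * Bg) :=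
          ENNReal.ofReal_le_ofReal hreal
      _ ≤ ENNReal.ofReal |res z.2|
            + ENNReal.ofReal (gnorm G α' q t (z.1.1 - z.2.1) * Bg) :=
          ENNReal.ofReal_add_le
      _ = g z + h z := by
          rw [hg, hh, ENNReal.ofReal_mul (gnorm_nonneg ht _)]
  -- squared pointwise
  have hsq : ∀ᵐ z ∂π, f z ^ (2:ℝ) ≤ ((g + h) z) ^ (2:ℝ) := by
    filter_upwards [hpt] with z hz
    exact ENNReal.rpow_le_rpow hz (by norm_num)
  have hFfst : ∀ z : ((Fin d → ℝ) × ℝ) × ((Fin d → ℝ) × ℝ), F z.1 = f z ^ (2:ℝ) := by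
    intro z
    rw [hF, hf, rpow_two_eq_sq, ← ENNReal.ofReal_pow (abs_nonneg _), sq_abs]
  have hFsnd : ∀ z : ((Fin d → ℝ) × ℝ) × ((Fin d → ℝ) × ℝ), F z.2 = g z ^ (2:ℝ) := by
    intro z
    rw [hF, hg, rpow_two_eq_sq, ← ENNReal.ofReal_pow (abs_nonneg _), sq_abs]
  have hmapP : ∫⁻ z, F z ∂P = ∫⁻ z, f z ^ (2:ℝ) ∂π := by
    rw [← h1, lintegral_map hFm measurable_fst]
    exact lintegral_congr fun z => hFfst z
  have hmapQ : ∫⁻ z, F z ∂Q = ∫⁻ z, g z ^ (2:ℝ) ∂π := by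
    rw [← h2, lintegral_map hFm measurable_snd]
    exact lintegral_congr fun z => hFsnd z
  have hhb : ∫⁻ z, h z ^ (2:ℝ) ∂π ≤ ENNReal.ofReal Bg ^ 2 * b := by
    have hce : ∀ᵐ z ∂π, h z ^ (2:ℝ) = ENNReal.ofReal Bg ^ 2 * cost z := by
      filter_upwards [haey] with z hz
      rw [hh, rpow_two_eq_sq, mul_pow, hcost]
      simp only [if_pos hz]
      rw [← ENNReal.ofReal_pow (gnorm_nonneg ht _)]
      ring
    rw [lintegral_congr_ae hce, lintegral_const_mul _ hcm]
    exact mul_le_mul_right hb _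
  have hmink := ENNReal.lintegral_Lp_add_le (μ := π) (p := (2:ℝ)) hgm.aemeasurable hhm.aemeasurable
    (by norm_num : (1:ℝ) ≤ 2)
  have hfg : ∫⁻ z, f z ^ (2:ℝ) ∂π ≤ ∫⁻ z, ((g + h) z) ^ (2:ℝ) ∂π := lintegral_mono_ae hsq
  calc (∫⁻ z, F z ∂P) ^ (1/2:ℝ)
      = (∫⁻ z, f z ^ (2:ℝ) ∂π) ^ (1/2:ℝ) := by rw [hmapP]
    _ ≤ (∫⁻ z, ((g + h) z) ^ (2:ℝ) ∂π) ^ (1/2:ℝ) := ENNReal.rpow_le_rpow hfg (by norm_num)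
    _ ≤ (∫⁻ z, g z ^ (2:ℝ) ∂π) ^ (1/2:ℝ) + (∫⁻ z, h z ^ (2:ℝ) ∂π) ^ (1/2:ℝ) := hmink
    _ ≤ (∫⁻ z, F z ∂Q) ^ (1/2:ℝ) + (ENNReal.ofReal Bg ^ 2 * b) ^ (1/2:ℝ) := by
        rw [hmapQ]
        exact add_le_add_right (ENNReal.rpow_le_rpow hhb (by norm_num)) _
    _ = (∫⁻ z, F z ∂Q) ^ (1/2:ℝ) + b ^ (1/2:ℝ) * ENNReal.ofReal Bg := by
        rw [ENNReal.mul_rpow_of_nonneg _ _ (by norm_num), sq_rpow_half, mul_comm]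

end Coupling

section Empirical

lemma lintegral_empirical {E : Type} [MeasurableSpace E] {n : ℕ} (x : Fin n → E)
    (f : E → ℝ≥0∞) (hf : Measurable f) :
    ∫⁻ z, f z ∂((n : ℝ≥0∞)⁻¹ • ∑ i : Fin n, Measure.dirac (x i))
      = (n : ℝ≥0∞)⁻¹ * ∑ i, f (x i) := by
  rw [lintegral_smul_measure, lintegral_finset_sum_measure]
  congr 1
  exact Finset.sum_congr rfl fun i _ => lintegral_dirac' _ hf

lemma empirical_prob {E : Type} [MeasurableSpace E] {n : ℕ} (hn : 0 < n) (x : Fin n → E) :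
    IsProbabilityMeasure ((n : ℝ≥0∞)⁻¹ • ∑ i : Fin n, Measure.dirac (x i)) := by
  constructor
  rw [Measure.smul_apply, smul_eq_mul]
  have : (∑ i : Fin n, Measure.dirac (x i)) Set.univ = n := by
    rw [Measure.coe_finset_sum]
    simp [measure_univ]
  rw [this]
  exact ENNReal.inv_mul_cancel (by exact_mod_cast hn.ne') (by simp)

lemma inv_nat_ofReal {n : ℕ} (hn : 0 < n) :
    ((n : ℝ≥0∞))⁻¹ = ENNReal.ofReal ((n : ℝ)⁻¹) := by
  rw [ENNReal.ofReal_inv_of_pos (by exact_mod_cast hn), ENNReal.ofReal_natCast]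

lemma ofReal_rpow_half {r : ℝ} (hr : 0 ≤ r) :
    (ENNReal.ofReal r) ^ (1/2 : ℝ) = ENNReal.ofReal (Real.sqrt r) := by
  conv_lhs => rw [← Real.sq_sqrt hr]
  rw [ENNReal.ofReal_pow (Real.sqrt_nonneg r), sq_rpow_half]

lemma val_empirical {d : ℕ} {n : ℕ} (hn : 0 < n) (x : Fin n → (Fin d → ℝ) × ℝ)
    (β : Fin d → ℝ) :
    ∫⁻ z, ENNReal.ofReal ((z.2 - ∑ k, z.1 k * β k) ^ 2)
        ∂((n : ℝ≥0∞)⁻¹ • ∑ i : Fin n, Measure.dirac (x i))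
      = ENNReal.ofReal ((n : ℝ)⁻¹ * ∑ i, ((x i).2 - ∑ k, (x i).1 k * β k) ^ 2) := by
  rw [lintegral_empirical x _ (res_continuous β).measurable]
  rw [← ENNReal.ofReal_sum_of_nonneg (fun i _ => sq_nonneg _), inv_nat_ofReal hn,
    ← ENNReal.ofReal_mul (by positivity)]

end Empirical

section Lower

variable {d dbar : ℕ} {G : Fin dbar → Finset (Fin d)} (hG : IsPartition G)
  {α : Fin dbar → ℝ} (hα : ∀ i, 0 < α i)

include hG hα in
lemma lower_bound {p q s t : ℝ≥0∞} (hp : 1 ≤ p) (hq : 1 ≤ q) (hs : 1 ≤ s) (ht : 1 ≤ t)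
    (hpq : 1/p + 1/q = 1) (hst : 1/s + 1/t = 1) {n : ℕ} (hn : 0 < n)
    (X : Fin n → Fin d → ℝ) (Y : Fin n → ℝ) {δ : ℝ} (hδ : 0 < δ) (β : Fin d → ℝ) :
    ∃ P : Measure ((Fin d → ℝ) × ℝ), IsProbabilityMeasure P ∧
      Dc (fun u w => if u.2 = w.2 then
          ENNReal.ofReal ((gnorm G (fun i => (α i)⁻¹) q t (u.1 - w.1)) ^ 2) else ⊤)
        P ((n : ℝ≥0∞)⁻¹ • ∑ i : Fin n, Measure.dirac (X i, Y i)) ≤ ENNReal.ofReal δ ∧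
      (∫⁻ z, ENNReal.ofReal ((z.2 - ∑ k, z.1 k * β k) ^ 2) ∂P) ^ (1/2 : ℝ)
        = (∫⁻ z, ENNReal.ofReal ((z.2 - ∑ k, z.1 k * β k) ^ 2)
              ∂((n : ℝ≥0∞)⁻¹ • ∑ i : Fin n, Measure.dirac (X i, Y i))) ^ (1/2 : ℝ)
          + ENNReal.ofReal (Real.sqrt δ * gnorm G α p s β) := by
  obtain ⟨v, hv1, hv2⟩ := gnorm_dual_exists hG hα hp hq hs ht hpq hst β
  set α' : Fin dbar → ℝ := fun i => (α i)⁻¹ with hα'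
  set Bg := gnorm G α p s β with hBg
  have hBg0 : 0 ≤ Bg := gnorm_nonneg hs β
  set Z : Fin n → ℝ := fun i => Y i - ∑ k, X i k * β k with hZ
  set Sq : ℝ := (n : ℝ)⁻¹ * ∑ i, (Z i) ^ 2 with hSq
  have hnR : (0 : ℝ) < n := by exact_mod_cast hn
  have hSq0 : 0 ≤ Sq := by positivity
  set S := Real.sqrt Sq with hSdef
  have hS0 : 0 ≤ S := Real.sqrt_nonneg _
  have hSS : S ^ 2 = Sq := Real.sq_sqrt hSq0
  set lam : Fin n → ℝ := fun i => if Sq = 0 then Real.sqrt δ else Real.sqrt δ * Z i / S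
    with hlam
  set X' : Fin n → Fin d → ℝ := fun i => X i - (lam i) • v with hX'
  set P : Measure ((Fin d → ℝ) × ℝ) :=
    (n : ℝ≥0∞)⁻¹ • ∑ i : Fin n, Measure.dirac (X' i, Y i) with hP
  set π : Measure (((Fin d → ℝ) × ℝ) × ((Fin d → ℝ) × ℝ)) :=
    (n : ℝ≥0∞)⁻¹ • ∑ i : Fin n, Measure.dirac ((X' i, Y i), (X i, Y i)) with hπ
  -- average of lam^2 equals δ
  have hlamsq : (n : ℝ)⁻¹ * ∑ i, (lam i) ^ 2 = δ := by
    by_cases hSqz : Sq = 0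
    · simp only [hlam, if_pos hSqz]
      rw [Finset.sum_const, Finset.card_univ, Fintype.card_fin, nsmul_eq_mul,
        Real.sq_sqrt hδ.le]
      field_simp
    · have hSpos : 0 < S := Real.sqrt_pos.mpr (lt_of_le_of_ne hSq0 (Ne.symm hSqz))
      have : ∀ i, (lam i) ^ 2 = δ * (Z i) ^ 2 / Sq := by
        intro i
        simp only [hlam, if_neg hSqz]
        rw [div_pow, mul_pow, Real.sq_sqrt hδ.le, hSS]
      simp only [this]
      rw [← Finset.sum_div, ← Finset.mul_sum, ← mul_div_assoc]
      rw [show (n:ℝ)⁻¹ * (δ * ∑ i, Z i ^ 2) = δ * ((n:ℝ)⁻¹ * ∑ i, Z i ^ 2) by ring, ← hSq,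
        mul_div_assoc, div_self hSqz, mul_one]
  -- residual identity
  have hres' : ∀ i, Y i - ∑ k, X' i k * β k = Z i + lam i * Bg := by
    intro i
    simp only [hX', Pi.sub_apply, Pi.smul_apply, smul_eq_mul, sub_mul, Finset.sum_sub_distrib]
    rw [hZ]
    have h2 : ∑ k, lam i * v k * β k = lam i * Bg := by
      calc ∑ k, lam i * v k * β k = ∑ k, lam i * (v k * β k) :=
            Finset.sum_congr rfl fun k _ => by ring
        _ = lam i * ∑ k, v k * β k := (Finset.mul_sum _ _ _).symm
        _ = lam i * Bg := by rw [hv2]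
    rw [h2]
    simp only [hZ]
    ring
  have hsum : (n : ℝ)⁻¹ * ∑ i, (Z i + lam i * Bg) ^ 2 = (S + Real.sqrt δ * Bg) ^ 2 := by
    by_cases hSqz : Sq = 0
    · have hZzero : ∀ i, Z i = 0 := by
        intro i
        have hsum0 : ∑ j, (Z j) ^ 2 = 0 := by
          have := hSq ▸ hSqz
          field_simp [hnR.ne'] at this
          simpa using this
        have := Finset.sum_eq_zero_iff_of_nonneg (fun j _ => sq_nonneg (Z j)) |>.mp hsum0
        exact pow_eq_zero_iff (two_ne_zero) |>.mp (this i (Finset.mem_univ i))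
      have hSz : S = 0 := by rw [hSdef, hSqz, Real.sqrt_zero]
      simp only [hlam, if_pos hSqz, hZzero, zero_add]
      rw [Finset.sum_const, Finset.card_univ, Fintype.card_fin, nsmul_eq_mul, hSz, zero_add]
      field_simp
    · have hSpos : 0 < S := Real.sqrt_pos.mpr (lt_of_le_of_ne hSq0 (Ne.symm hSqz))
      have hterm : ∀ i, (Z i + lam i * Bg) ^ 2 = (Z i) ^ 2 * ((S + Real.sqrt δ * Bg) / S) ^ 2 := by
        intro i
        simp only [hlam, if_neg hSqz]
        field_simp
      simp only [hterm]
      rw [← Finset.sum_mul, show (n:ℝ)⁻¹ * ((∑ i, Z i ^ 2) * ((S + Real.sqrt δ * Bg)/S)^2)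
          = ((n:ℝ)⁻¹ * ∑ i, Z i ^ 2) * ((S + Real.sqrt δ * Bg)/S)^2 by ring, ← hSq,
        div_pow, ← hSS]
      field_simp
  -- marginals of the explicit coupling
  have hm1 : π.map Prod.fst = P := by
    rw [hπ, Measure.map_smul, measure_map_finset_sum measurable_fst, hP]
    congr 1
    exact Finset.sum_congr rfl fun i _ => Measure.map_dirac' measurable_fst _
  have hm2 : π.map Prod.snd
      = (n : ℝ≥0∞)⁻¹ • ∑ i : Fin n, Measure.dirac (X i, Y i) := by
    rw [hπ, Measure.map_smul, measure_map_finset_sum measurable_snd]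
    congr 1
    exact Finset.sum_congr rfl fun i _ => Measure.map_dirac' measurable_snd _
  have hgv : 0 ≤ gnorm G α' q t v := gnorm_nonneg ht v
  -- cost of the coupling
  have hcost_int : ∫⁻ z, (if z.1.2 = z.2.2 then
      ENNReal.ofReal ((gnorm G α' q t (z.1.1 - z.2.1)) ^ 2) else ⊤) ∂π
      ≤ ENNReal.ofReal δ := by
    rw [show (fun z : ((Fin d → ℝ) × ℝ) × ((Fin d → ℝ) × ℝ) => (if z.1.2 = z.2.2 then
        ENNReal.ofReal ((gnorm G α' q t (z.1.1 - z.2.1)) ^ 2) else ⊤))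
        = fun z => (if z.1.2 = z.2.2 then
        ENNReal.ofReal ((gnorm G α' q t (z.1.1 - z.2.1)) ^ 2) else ⊤) from rfl]
    rw [hπ, lintegral_empirical _ _ (cost_measurable hq ht)]
    have hterm : ∀ i : Fin n,
        (if ((X' i, Y i), (X i, Y i)).1.2 = ((X' i, Y i), (X i, Y i)).2.2 then
          ENNReal.ofReal ((gnorm G α' q t (((X' i, Y i), (X i, Y i)).1.1
            - ((X' i, Y i), (X i, Y i)).2.1)) ^ 2) else ⊤)
        ≤ ENNReal.ofReal ((lam i) ^ 2) := by
      intro i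
      have hyy : ((X' i, Y i), (X i, Y i)).1.2 = ((X' i, Y i), (X i, Y i)).2.2 := rfl
      rw [if_pos hyy]
      apply ENNReal.ofReal_le_ofReal
      have hXX : (((X' i, Y i), (X i, Y i)).1.1 - ((X' i, Y i), (X i, Y i)).2.1)
          = (-(lam i)) • v := by
        show X' i - X i = (-(lam i)) • v
        rw [hX']
        funext k
        simp [Pi.sub_apply, Pi.smul_apply, smul_eq_mul]
      rw [hXX, gnorm_smul hq ht, abs_neg, mul_pow, ← abs_pow, abs_of_nonneg (sq_nonneg _)]
      calc (lam i) ^ 2 * (gnorm G α' q t v) ^ 2 ≤ (lam i) ^ 2 * 1 := by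
            refine mul_le_mul_of_nonneg_left ?_ (sq_nonneg _)
            exact pow_le_one₀ hgv hv1
        _ = (lam i) ^ 2 := mul_one _
    calc (n : ℝ≥0∞)⁻¹ * ∑ i, _ ≤ (n : ℝ≥0∞)⁻¹ * ∑ i, ENNReal.ofReal ((lam i) ^ 2) :=
          mul_le_mul_right (Finset.sum_le_sum fun i _ => hterm i) _
      _ = ENNReal.ofReal ((n:ℝ)⁻¹ * ∑ i, (lam i) ^ 2) := by
          rw [← ENNReal.ofReal_sum_of_nonneg (fun i _ => sq_nonneg _), inv_nat_ofReal hn,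
            ← ENNReal.ofReal_mul (by positivity)]
      _ = ENNReal.ofReal δ := by rw [hlamsq]
  refine ⟨P, ?_, ?_, ?_⟩
  · rw [hP]; exact empirical_prob hn _
  · refine le_trans ?_ hcost_int
    refine le_trans (iInf_le _ π) ?_
    refine le_trans (iInf_le _ hm1) (iInf_le _ hm2)
  · have hvalP : ∫⁻ z, ENNReal.ofReal ((z.2 - ∑ k, z.1 k * β k) ^ 2) ∂P
        = ENNReal.ofReal ((S + Real.sqrt δ * Bg) ^ 2) := by
      rw [hP, val_empirical hn (fun i => (X' i, Y i)) β]
      rw [← hsum]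
      congr 1
      congr 1
      exact Finset.sum_congr rfl fun i _ => by rw [hres' i]
    have hvalPn : ∫⁻ z, ENNReal.ofReal ((z.2 - ∑ k, z.1 k * β k) ^ 2)
        ∂((n : ℝ≥0∞)⁻¹ • ∑ i : Fin n, Measure.dirac (X i, Y i))
        = ENNReal.ofReal Sq := by
      rw [val_empirical hn (fun i => (X i, Y i)) β]
    have h1 : 0 ≤ S + Real.sqrt δ * Bg := by positivity
    rw [hvalP, hvalPn, ofReal_rpow_half (by positivity), ofReal_rpow_half hSq0,
      Real.sqrt_sq h1, ← hSdef, ← ENNReal.ofReal_add hS0 (by positivity)]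

end Lower

section Key

variable {d dbar : ℕ} {G : Fin dbar → Finset (Fin d)} (hG : IsPartition G)
  {α : Fin dbar → ℝ} (hα : ∀ i, 0 < α i)

include hG hα in
lemma keyEq {p q s t : ℝ≥0∞} (hp : 1 ≤ p) (hq : 1 ≤ q) (hs : 1 ≤ s) (ht : 1 ≤ t)
    (hpq : 1/p + 1/q = 1) (hst : 1/s + 1/t = 1) {n : ℕ} (hn : 0 < n)
    (X : Fin n → Fin d → ℝ) (Y : Fin n → ℝ) {δ : ℝ} (hδ : 0 < δ) (β : Fin d → ℝ) :
    (⨆ (P : Measure ((Fin d → ℝ) × ℝ)) (_ : IsProbabilityMeasure P)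
        (_ : Dc (fun u w => if u.2 = w.2 then
            ENNReal.ofReal ((gnorm G (fun i => (α i)⁻¹) q t (u.1 - w.1)) ^ 2) else ⊤)
          P ((n : ℝ≥0∞)⁻¹ • ∑ i : Fin n, Measure.dirac (X i, Y i)) ≤ ENNReal.ofReal δ),
        (∫⁻ z, ENNReal.ofReal ((z.2 - ∑ k, z.1 k * β k) ^ 2) ∂P) ^ (1 / 2 : ℝ))
      = (∫⁻ z, ENNReal.ofReal ((z.2 - ∑ k, z.1 k * β k) ^ 2)
            ∂((n : ℝ≥0∞)⁻¹ • ∑ i : Fin n, Measure.dirac (X i, Y i))) ^ (1 / 2 : ℝ)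
        + ENNReal.ofReal (Real.sqrt δ * gnorm G α p s β) := by
  set Bg := gnorm G α p s β with hBg
  have hBg0 : 0 ≤ Bg := gnorm_nonneg hs β
  set k : ℝ≥0∞ := ENNReal.ofReal Bg with hk
  have hkne : k ≠ ∞ := ENNReal.ofReal_ne_top
  set Pn : Measure ((Fin d → ℝ) × ℝ) :=
    (n : ℝ≥0∞)⁻¹ • ∑ i : Fin n, Measure.dirac (X i, Y i) with hPn
  set R0 := (∫⁻ z, ENNReal.ofReal ((z.2 - ∑ k, z.1 k * β k) ^ 2) ∂Pn) ^ (1 / 2 : ℝ) with hR0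
  have hsplit : ENNReal.ofReal (Real.sqrt δ * Bg) = (ENNReal.ofReal δ) ^ (1/2 : ℝ) * k := by
    rw [ENNReal.ofReal_mul (Real.sqrt_nonneg δ), ofReal_rpow_half hδ.le]
  refine le_antisymm ?_ ?_
  · refine iSup_le fun P => iSup_le fun hP => iSup_le fun hD => ?_
    rw [hsplit]
    have hcore : ∀ b : ℝ≥0∞, ENNReal.ofReal δ < b → b ≠ ∞ →
        (∫⁻ z, ENNReal.ofReal ((z.2 - ∑ k, z.1 k * β k) ^ 2) ∂P) ^ (1 / 2 : ℝ)
          ≤ R0 + b ^ (1/2 : ℝ) * k := by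
      intro b hblt hbne
      have hlt : Dc (fun u w => if u.2 = w.2 then
          ENNReal.ofReal ((gnorm G (fun i => (α i)⁻¹) q t (u.1 - w.1)) ^ 2) else ⊤) P Pn < b :=
        lt_of_le_of_lt hD hblt
      simp only [Dc, iInf_lt_iff] at hlt
      obtain ⟨π, hm1, hm2, hπ⟩ := hlt
      exact coupling_bound hG hα hp hq hs ht hpq hst β P Pn π hm1 hm2 b hbne hπ.le
    refine ENNReal.le_of_forall_pos_le_add fun ε hε hfin => ?_
    by_cases hk0 : k = 0
    · have := hcore (ENNReal.ofReal δ + 1) (ENNReal.lt_add_right ENNReal.ofReal_ne_top one_ne_zero)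
        (by finiteness)
      rw [hk0, mul_zero] at this ⊢
      exact this.trans (le_add_right le_rfl)
    · set ε' : ℝ≥0∞ := ((ε : ℝ≥0∞) / k) ^ 2 with hε'
      have hεk : (ε : ℝ≥0∞) / k ≠ 0 := by
        refine (ENNReal.div_pos (by exact_mod_cast hε.ne') hkne).ne'
      have hε'0 : ε' ≠ 0 := pow_ne_zero 2 hεk
      have hε'top : ε' ≠ ∞ := by
        rw [hε']
        exact ENNReal.pow_ne_top (by simp [ENNReal.div_eq_top, hk0])
      have hb := hcore (ENNReal.ofReal δ + ε')
        (ENNReal.lt_add_right ENNReal.ofReal_ne_top hε'0)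
        (by finiteness)
      refine hb.trans ?_
      have hrpow : (ENNReal.ofReal δ + ε') ^ (1/2:ℝ)
          ≤ (ENNReal.ofReal δ) ^ (1/2:ℝ) + ε' ^ (1/2:ℝ) :=
        ENNReal.rpow_add_le_add_rpow _ _ (by norm_num) (by norm_num)
      have hε'half : ε' ^ (1/2:ℝ) = (ε : ℝ≥0∞) / k := by rw [hε', sq_rpow_half]
      calc R0 + (ENNReal.ofReal δ + ε') ^ (1/2:ℝ) * k
          ≤ R0 + ((ENNReal.ofReal δ) ^ (1/2:ℝ) + ε' ^ (1/2:ℝ)) * k :=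
            add_le_add_right (mul_le_mul_left hrpow k) _
        _ = R0 + (ENNReal.ofReal δ) ^ (1/2:ℝ) * k + ε' ^ (1/2:ℝ) * k := by
            rw [add_mul, add_assoc]
        _ = R0 + (ENNReal.ofReal δ) ^ (1/2:ℝ) * k + ε := by
            rw [hε'half, ENNReal.div_mul_cancel hk0 hkne]
  · obtain ⟨P, hprob, hcost, hval⟩ :=
      lower_bound hG hα hp hq hs ht hpq hst hn X Y hδ β
    rw [← hval]
    exact le_iSup_of_le P (le_iSup_of_le hprob (le_iSup_of_le hcost le_rfl))

end Key

end AuxLpn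

theorem statement5 {d dbar : ℕ} (hd : 1 ≤ d) {n : ℕ} (hn : 0 < n)
    (G : Fin dbar → Finset (Fin d)) (hG : IsPartition G)
    (α : Fin dbar → ℝ) (hα : ∀ i, 0 < α i)
    (p q s t : ℝ≥0∞) (hp : 1 ≤ p) (hq : 1 ≤ q) (hs : 1 ≤ s) (ht : 1 ≤ t)
    (hpq : 1 / p + 1 / q = 1) (hst : 1 / s + 1 / t = 1)
    (X : Fin n → Fin d → ℝ) (Y : Fin n → ℝ) (δ : ℝ) (hδ : 0 < δ) :
    (⨅ β : Fin d → ℝ,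
        ⨆ (P : Measure ((Fin d → ℝ) × ℝ)) (_ : IsProbabilityMeasure P)
          (_ : Dc
              (fun u w => if u.2 = w.2 then
                ENNReal.ofReal ((gnorm G (fun i => (α i)⁻¹) q t (u.1 - w.1)) ^ 2) else ⊤)
              P ((n : ℝ≥0∞)⁻¹ • ∑ i : Fin n, Measure.dirac (X i, Y i)) ≤ ENNReal.ofReal δ),
          (∫⁻ z, ENNReal.ofReal ((z.2 - ∑ k, z.1 k * β k) ^ 2) ∂P) ^ (1 / 2 : ℝ))
      = ⨅ β : Fin d → ℝ,
          ((∫⁻ z, ENNReal.ofReal ((z.2 - ∑ k, z.1 k * β k) ^ 2)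
                ∂((n : ℝ≥0∞)⁻¹ • ∑ i : Fin n, Measure.dirac (X i, Y i))) ^ (1 / 2 : ℝ)
            + ENNReal.ofReal (Real.sqrt δ * gnorm G α p s β)) :=
  iInf_congr fun β => keyEq hG hα hp hq hs ht hpq hst hn X Y hδ β
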